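/- Let ℤ wr ℤ = W ⋊ ⟨b⟩ with standard generators a, b, and let w be any nontrivial element of the base group W. Then the assignment a ↦ w, b ↦ b extends to an injective homomorphism from ℤ wr ℤ onto the subgroup ⟨b, w⟩; in particular, every subgroup of ℤ wr ℤ of the form ⟨b, w⟩ with w ∈ W, w ≠ 1, is isomorphic to ℤ wr ℤ. -/

import Mathlib

open scoped Pointwise

namespace DistortionPaper

section Defs

variable (A B : Type*) [Group A] [Group B]

/-- The base group of the restricted wreath product: finitely supported functions `B → A`
under pointwise multiplication, as a subgroup of `B → A`. -/
def WreathBase : Subgroup (B → A) where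
  carrier := {f | (Function.mulSupport f).Finite}
  one_mem' := by
    simp [Function.mulSupport_one]
  mul_mem' := by
    intro f g hf hg
    exact ((Set.Finite.union hf hg).subset (Function.mulSupport_mul f g))
  inv_mem' := by
    intro f hf
    simpa [Function.mulSupport_inv] using hf

/-- The shift automorphism of the base group: `(g ∘ f)(x) = f(x * g)`. -/
def wreathShift (g : B) : WreathBase A B ≃* WreathBase A B where
  toFun f := ⟨fun x => (f : B → A) (x * g), by
    have h : Function.mulSupport (fun x => (f : B → A) (x * g))
        ⊆ (fun x : B => x * g) ⁻¹' Function.mulSupport (f : B → A) := fun x hx => hx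
    exact (Set.Finite.preimage (Set.injOn_of_injective (mul_left_injective g)) f.2).subset h⟩
  invFun f := ⟨fun x => (f : B → A) (x * g⁻¹), by
    have h : Function.mulSupport (fun x => (f : B → A) (x * g⁻¹))
        ⊆ (fun x : B => x * g⁻¹) ⁻¹' Function.mulSupport (f : B → A) := fun x hx => hx
    exact (Set.Finite.preimage (Set.injOn_of_injective (mul_left_injective g⁻¹)) f.2).subset h⟩
  left_inv f := Subtype.ext <| funext fun x => by simp [mul_assoc]
  right_inv f := Subtype.ext <| funext fun x => by simp [mul_assoc]
  map_mul' f₁ f₂ := Subtype.ext <| funext fun _ => rfl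

/-- The action of `B` on the base group by shifts. -/
def wreathAction : B →* MulAut (WreathBase A B) where
  toFun g := wreathShift A B g
  map_one' := by
    refine MulEquiv.ext fun f => Subtype.ext <| funext fun x => ?_
    show (f : B → A) (x * 1) = (f : B → A) x
    rw [mul_one]
  map_mul' g₁ g₂ := by
    refine MulEquiv.ext fun f => Subtype.ext <| funext fun x => ?_
    show (f : B → A) (x * (g₁ * g₂)) = (f : B → A) (x * g₁ * g₂)
    rw [mul_assoc]

/-- The restricted wreath product `A wr B`. -/
abbrev WreathProduct := WreathBase A B ⋊[wreathAction A B] B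

/-- The element of the base group supported at `1 ∈ B` with value `a`. -/
noncomputable def toBase (a : A) : WreathBase A B := by
  classical
  exact ⟨fun x => if x = (1 : B) then a else 1, by
    apply Set.Finite.subset (Set.finite_singleton (1 : B))
    intro x hx
    simp only [Function.mem_mulSupport] at hx
    simp only [Set.mem_singleton_iff]
    by_contra hne
    rw [if_neg hne] at hx
    exact hx rfl⟩

/-- The canonical copy of `A` in `A wr B` (functions supported at `1`). -/
noncomputable def ofPassive (a : A) : WreathProduct A B :=
  SemidirectProduct.inl (toBase A B a)

/-- The canonical copy of `B` in `A wr B`. -/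
def ofActive (g : B) : WreathProduct A B := SemidirectProduct.inr g

/-- The generating set `S ∪ T` of `A wr B` obtained from generating sets `S` of `A`
and `T` of `B`. -/
def wreathGen (S : Set A) (T : Set B) : Set (WreathProduct A B) :=
  (fun a => ofPassive A B a) '' S ∪ (fun g => ofActive A B g) '' T

end Defs

/-- Word length of `g` with respect to the set `T`: the least `n` such that `g` is a
product of `n` elements of `T ∪ T⁻¹` (and `0` if no such `n` exists). -/
noncomputable def wordLength {G : Type*} [Group G] (T : Set G) (g : G) : ℕ :=
  sInf {n | ∃ f : Fin n → G, (∀ i, f i ∈ T ∪ T⁻¹) ∧ (List.ofFn f).prod = g}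

/-- The distortion function of a subgroup `H` of `G`, where `T` is a generating set of `G`
and `S` a generating set of `H`. -/
noncomputable def distortion {G : Type*} [Group G] (T : Set G) (H : Subgroup G)
    (S : Set H) (l : ℕ) : ℕ :=
  sSup (wordLength S '' {h : H | wordLength T (h : G) ≤ l})

/-- `f ⪯ g` : there is `C > 0` with `f l ≤ C * g (C * l)` for all `l`. -/
def Dominates (f g : ℕ → ℕ) : Prop := ∃ C : ℕ, 0 < C ∧ ∀ l, f l ≤ C * g (C * l)

/-- `f ≈ g` : `f ⪯ g` and `g ⪯ f`. -/
def DistEquiv (f g : ℕ → ℕ) : Prop := Dominates f g ∧ Dominates g f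

/-- A subgroup is subnormal if there is a finite chain from it to the whole group,
each term normal in the next. -/
def IsSubnormal {G : Type*} [Group G] (H : Subgroup G) : Prop :=
  ∃ (n : ℕ) (c : ℕ → Subgroup G), c 0 = H ∧ c n = ⊤ ∧
    ∀ i < n, c i ≤ c (i + 1) ∧ ∀ x ∈ c (i + 1), ∀ h ∈ c i, x * h * x⁻¹ ∈ c i

/-- `ℤ` as a multiplicative group. -/
abbrev Mℤ := Multiplicative ℤ

/-- The wreath product `ℤ wr ℤ`. -/
abbrev ZwrZ := WreathProduct Mℤ Mℤ

/-- The standard generator `a` of `ℤ wr ℤ` (passive copy, supported at `1`). -/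
noncomputable def aZ : ZwrZ := ofPassive Mℤ Mℤ (Multiplicative.ofAdd 1)

/-- The standard generator `b` of `ℤ wr ℤ` (active copy). -/
def bZ : ZwrZ := ofActive Mℤ Mℤ (Multiplicative.ofAdd 1)



section Aux

/-- The base group of `ℤ wr ℤ` is isomorphic (multiplicatively) to the additive group of
the Laurent polynomial ring `ℤ[ℤ]`. -/
noncomputable def EW : WreathBase Mℤ Mℤ ≃* Multiplicative (AddMonoidAlgebra ℤ ℤ) where
  toFun f := Multiplicative.ofAdd (AddMonoidAlgebra.ofCoeff (Finsupp.ofSupportFinite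
      (fun x : ℤ => Multiplicative.toAdd ((f : Mℤ → Mℤ) (Multiplicative.ofAdd x)))
      (by
        have h : Function.support (fun x : ℤ =>
            Multiplicative.toAdd ((f : Mℤ → Mℤ) (Multiplicative.ofAdd x)))
            ⊆ (fun x : ℤ => Multiplicative.ofAdd x) ⁻¹' Function.mulSupport (f : Mℤ → Mℤ) :=
          fun x hx => hx
        exact (Set.Finite.preimage (Set.injOn_of_injective Multiplicative.ofAdd.injective) f.2).subset h)))
  invFun p := ⟨fun x => Multiplicative.ofAdd ((Multiplicative.toAdd p).coeff (Multiplicative.toAdd x)), by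
    have h : Function.mulSupport (fun x : Mℤ => Multiplicative.ofAdd ((Multiplicative.toAdd p).coeff (Multiplicative.toAdd x)))
        ⊆ ⇑Multiplicative.toAdd ⁻¹' Function.support ⇑(Multiplicative.toAdd p).coeff := by
      intro x hx
      exact fun h0 => hx (by show Multiplicative.ofAdd _ = 1; rw [h0]; rfl)
    exact (Set.Finite.preimage (Set.injOn_of_injective Multiplicative.toAdd.injective)
      ((Finsupp.fun_support_eq (Multiplicative.toAdd p).coeff) ▸ (Multiplicative.toAdd p).coeff.support.finite_toSet)).subset h⟩
  left_inv f := Subtype.ext rfl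
  right_inv p := by
    apply Multiplicative.toAdd.injective
    exact AddMonoidAlgebra.ext (Finsupp.ext fun x => rfl)
  map_mul' f g := by
    apply Multiplicative.toAdd.injective
    rw [toAdd_mul]
    refine AddMonoidAlgebra.ext (Finsupp.ext fun x => ?_)
    rw [AddMonoidAlgebra.coeff_add, Finsupp.add_apply]
    rfl

lemma EW_apply (f : WreathBase Mℤ Mℤ) (x : ℤ) :
    (Multiplicative.toAdd (EW f)).coeff x
      = Multiplicative.toAdd ((f : Mℤ → Mℤ) (Multiplicative.ofAdd x)) := rfl

lemma EW_shift (g : Mℤ) (f : WreathBase Mℤ Mℤ) :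
    Multiplicative.toAdd (EW ((wreathAction Mℤ Mℤ g) f))
      = AddMonoidAlgebra.single (-Multiplicative.toAdd g) 1 * Multiplicative.toAdd (EW f) := by
  refine AddMonoidAlgebra.ext (Finsupp.ext fun y => ?_)
  rw [AddMonoidAlgebra.coeff_single_mul_apply, neg_neg, one_mul, add_comm (Multiplicative.toAdd g) y]
  rfl

lemma EW_toBase (c : Mℤ) :
    Multiplicative.toAdd (EW (toBase Mℤ Mℤ c))
      = AddMonoidAlgebra.single 0 (Multiplicative.toAdd c) := by
  classical
  have htb : ∀ x : Mℤ, (toBase Mℤ Mℤ c : Mℤ → Mℤ) x = if x = 1 then c else 1 := by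
    intro x
    simp only [toBase]
    split <;> rfl
  refine AddMonoidAlgebra.ext (Finsupp.ext fun y => ?_)
  rw [EW_apply, AddMonoidAlgebra.coeff_single, Finsupp.single_apply, htb]
  by_cases hy : y = 0
  · subst hy; simp
  · rw [if_neg (by simpa using hy), if_neg (fun h => hy h.symm)]
    rfl

/-- Convolution with a fixed Laurent polynomial `p`, as an endomorphism of the base group. -/
noncomputable def PhiW (p : AddMonoidAlgebra ℤ ℤ) : WreathBase Mℤ Mℤ →* WreathBase Mℤ Mℤ where
  toFun f := EW.symm (Multiplicative.ofAdd (Multiplicative.toAdd (EW f) * p))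
  map_one' := by
    show EW.symm (Multiplicative.ofAdd (Multiplicative.toAdd (EW 1) * p)) = 1
    rw [map_one EW, toAdd_one, zero_mul]
    exact map_one EW.symm
  map_mul' f g := by
    show EW.symm (Multiplicative.ofAdd (Multiplicative.toAdd (EW (f * g)) * p))
        = EW.symm (Multiplicative.ofAdd (Multiplicative.toAdd (EW f) * p))
          * EW.symm (Multiplicative.ofAdd (Multiplicative.toAdd (EW g) * p))
    rw [← map_mul EW.symm, ← ofAdd_add, ← add_mul, ← toAdd_mul, map_mul EW]

lemma EW_PhiW (p : AddMonoidAlgebra ℤ ℤ) (f : WreathBase Mℤ Mℤ) :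
    Multiplicative.toAdd (EW (PhiW p f)) = Multiplicative.toAdd (EW f) * p := by
  show Multiplicative.toAdd (EW (EW.symm _)) = _
  rw [MulEquiv.apply_symm_apply, toAdd_ofAdd]

lemma PhiW_shift (p : AddMonoidAlgebra ℤ ℤ) (g : Mℤ) (f : WreathBase Mℤ Mℤ) :
    PhiW p ((wreathAction Mℤ Mℤ g) f) = (wreathAction Mℤ Mℤ g) (PhiW p f) := by
  apply EW.injective
  apply Multiplicative.toAdd.injective
  rw [EW_PhiW, EW_shift, EW_shift, EW_PhiW, mul_assoc]

lemma PhiW_injective (p : AddMonoidAlgebra ℤ ℤ) (hp : p ≠ 0) : Function.Injective (PhiW p) := by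
  refine (injective_iff_map_eq_one (PhiW p)).mpr fun f hf => ?_
  apply EW.injective
  apply Multiplicative.toAdd.injective
  have h1 : Multiplicative.toAdd (EW f) * p = 0 := by
    have h2 : Multiplicative.toAdd (EW (PhiW p f)) = Multiplicative.toAdd (EW (1 : WreathBase Mℤ Mℤ)) := by
      rw [hf]
    rwa [EW_PhiW, map_one EW, toAdd_one] at h2
  rcases mul_eq_zero.mp h1 with h | h
  · rw [h, map_one EW, toAdd_one]
  · exact absurd h hp

lemma bZ_zpow (n : ℤ) : bZ ^ n = SemidirectProduct.inr (Multiplicative.ofAdd n) := by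
  show SemidirectProduct.inr (Multiplicative.ofAdd 1) ^ n = _
  rw [← map_zpow]
  congr 1
  rw [← ofAdd_zsmul, smul_eq_mul, mul_one]

lemma inl_EW_symm_single_mem (a b : ℤ) :
    SemidirectProduct.inl (EW.symm (Multiplicative.ofAdd (AddMonoidAlgebra.single a b)))
      ∈ Subgroup.closure ({aZ, bZ} : Set ZwrZ) := by
  have hb : (bZ : ZwrZ) ∈ Subgroup.closure ({aZ, bZ} : Set ZwrZ) :=
    Subgroup.subset_closure (by simp)
  have ha : (aZ : ZwrZ) ∈ Subgroup.closure ({aZ, bZ} : Set ZwrZ) :=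
    Subgroup.subset_closure (by simp)
  have key : SemidirectProduct.inl (EW.symm (Multiplicative.ofAdd (AddMonoidAlgebra.single a b)))
      = bZ ^ (-a) * aZ ^ b * (bZ ^ (-a))⁻¹ := by
    rw [bZ_zpow]
    have haZ : (aZ : ZwrZ) ^ b
        = SemidirectProduct.inl (EW.symm (Multiplicative.ofAdd (AddMonoidAlgebra.single 0 b))) := by
      show SemidirectProduct.inl (toBase Mℤ Mℤ (Multiplicative.ofAdd 1)) ^ b = _
      rw [← map_zpow]
      congr 1
      apply EW.injective
      apply Multiplicative.toAdd.injective
      rw [map_zpow, toAdd_zpow, EW_toBase, MulEquiv.apply_symm_apply, toAdd_ofAdd]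
      refine AddMonoidAlgebra.ext (Finsupp.ext fun y => ?_)
      simp [Finsupp.single_apply]
    rw [haZ, ← map_inv, ← SemidirectProduct.inl_aut]
    congr 1
    apply EW.injective
    apply Multiplicative.toAdd.injective
    rw [MulEquiv.apply_symm_apply, toAdd_ofAdd, EW_shift, MulEquiv.apply_symm_apply, toAdd_ofAdd,
      toAdd_ofAdd, neg_neg, AddMonoidAlgebra.single_mul_single, add_zero, one_mul]
  rw [key]
  exact mul_mem (mul_mem (zpow_mem hb _) (zpow_mem ha _)) (inv_mem (zpow_mem hb _))

lemma closure_aZ_bZ : Subgroup.closure ({aZ, bZ} : Set ZwrZ) = ⊤ := by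
  rw [eq_top_iff]
  intro x _
  rw [← SemidirectProduct.inl_left_mul_inr_right x]
  refine mul_mem ?_ ?_
  · have : ∀ q : AddMonoidAlgebra ℤ ℤ,
        SemidirectProduct.inl (EW.symm (Multiplicative.ofAdd q))
          ∈ Subgroup.closure ({aZ, bZ} : Set ZwrZ) := by
      intro q
      induction q using AddMonoidAlgebra.induction with
      | zero =>
        have : EW.symm (Multiplicative.ofAdd (0 : AddMonoidAlgebra ℤ ℤ)) = 1 := map_one EW.symm
        rw [this, map_one]
        exact one_mem _
      | single_add a b q _ _ ih =>
        have key : (EW.symm (Multiplicative.ofAdd (AddMonoidAlgebra.single a b + q)) : WreathBase Mℤ Mℤ)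
            = EW.symm (Multiplicative.ofAdd (AddMonoidAlgebra.single a b))
              * EW.symm (Multiplicative.ofAdd q) := by
          rw [← map_mul]; rfl
        rw [key, map_mul]
        exact mul_mem (inl_EW_symm_single_mem a b) ih
    have hx : x.left = EW.symm (Multiplicative.ofAdd (Multiplicative.toAdd (EW x.left))) := by
      rw [ofAdd_toAdd, MulEquiv.symm_apply_apply]
    rw [hx]
    exact this _
  · rw [show SemidirectProduct.inr x.right = bZ ^ (Multiplicative.toAdd x.right) from by
      rw [bZ_zpow, ofAdd_toAdd]]
    exact zpow_mem (Subgroup.subset_closure (by simp)) _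

end Aux

/-- For any nontrivial `w` in the base group of `ℤ wr ℤ`, the assignment
`a ↦ w`, `b ↦ b` extends to an injective endomorphism of `ℤ wr ℤ` with image `⟨b, w⟩`;
in particular `⟨b, w⟩ ≅ ℤ wr ℤ`. -/
theorem statement11 (w : WreathBase Mℤ Mℤ) (hw : w ≠ 1) :
    ∃ φ : ZwrZ →* ZwrZ, Function.Injective φ ∧
      φ aZ = SemidirectProduct.inl w ∧ φ bZ = bZ ∧
      φ.range = Subgroup.closure {bZ, SemidirectProduct.inl w} := by
  classical
  set p : AddMonoidAlgebra ℤ ℤ := Multiplicative.toAdd (EW w) with hpdef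
  have hp : p ≠ 0 := by
    intro h
    apply hw
    apply EW.injective
    apply Multiplicative.toAdd.injective
    rw [map_one EW, toAdd_one]
    exact h
  have hcomp : ∀ g : Mℤ,
      (SemidirectProduct.inl.comp (PhiW p)).comp (MulEquiv.toMonoidHom ((wreathAction Mℤ Mℤ) g))
        = (MulEquiv.toMonoidHom (MulAut.conj
            (SemidirectProduct.inr g : ZwrZ))).comp (SemidirectProduct.inl.comp (PhiW p)) := by
    intro g
    refine MonoidHom.ext fun f => ?_
    show SemidirectProduct.inl (PhiW p ((wreathAction Mℤ Mℤ g) f)) = _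
    rw [PhiW_shift, SemidirectProduct.inl_aut, map_inv]
    rfl
  set φ : ZwrZ →* ZwrZ :=
    SemidirectProduct.lift (SemidirectProduct.inl.comp (PhiW p)) SemidirectProduct.inr hcomp
    with hφdef
  have hφinl : ∀ f : WreathBase Mℤ Mℤ, φ (SemidirectProduct.inl f)
      = SemidirectProduct.inl (PhiW p f) := fun f =>
    SemidirectProduct.lift_inl _ _ hcomp f
  have hφinr : ∀ g : Mℤ, φ (SemidirectProduct.inr g) = SemidirectProduct.inr g := fun g =>
    SemidirectProduct.lift_inr _ _ hcomp g
  have hφa : φ aZ = SemidirectProduct.inl w := by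
    rw [show (aZ : ZwrZ) = SemidirectProduct.inl (toBase Mℤ Mℤ (Multiplicative.ofAdd 1)) from rfl,
      hφinl]
    congr 1
    apply EW.injective
    apply Multiplicative.toAdd.injective
    rw [EW_PhiW, EW_toBase, toAdd_ofAdd, ← AddMonoidAlgebra.one_def, one_mul]
  have hφb : φ bZ = bZ := by
    rw [show (bZ : ZwrZ) = SemidirectProduct.inr (Multiplicative.ofAdd 1) from rfl, hφinr]
  refine ⟨φ, ?_, hφa, hφb, ?_⟩
  · refine (injective_iff_map_eq_one _).mpr fun x hx => ?_
    rw [← SemidirectProduct.inl_left_mul_inr_right x, map_mul, hφinl, hφinr] at hx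
    have hr : x.right = 1 := by
      have h2 := congrArg SemidirectProduct.rightHom hx
      simpa using h2
    have hl : PhiW p x.left = 1 := by
      rw [hr, map_one, mul_one] at hx
      exact SemidirectProduct.inl_injective hx
    have hxl : x.left = 1 := PhiW_injective p hp (by rw [hl, map_one])
    rw [← SemidirectProduct.inl_left_mul_inr_right x, hxl, hr, map_one, map_one, one_mul]
  · rw [MonoidHom.range_eq_map, ← closure_aZ_bZ, MonoidHom.map_closure, Set.image_pair,
      hφa, hφb, Set.pair_comm]


end DistortionPaper
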